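/- A contracting action (G, X) satisfies: the quotient map p : X^{-ω} → J_G satisfies Condition 3.2 (p(ξ) = p(η) implies p(ξw) = p(ηw) for all w ∈ X*) if and only if (G, X) satisfies Condition 3.4: for every left-infinite path e in the Moore diagram of the nucleus ending at a state g₀ and every w ∈ X*, there is a left-infinite path f in the nucleus with the same edge labels as e, ending at a state g with g(w) = w. -/

import Mathlib

/-- Appending the letter `i` at the right end of a left-infinite word. -/
def appendLetter {X : Type*} (i : X) (w : ℕ → X) : ℕ → X
  | 0 => i
  | n + 1 => w n

/-- Appending a finite word (first-read letter at the head of the list). -/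
def appendWord {X : Type*} : List X → (ℕ → X) → (ℕ → X)
  | [], ξ => ξ
  | a :: l, ξ => appendLetter a (appendWord l ξ)

/-- A left-infinite path in the Moore diagram of the nucleus, through states `(gₙ)`
with the `(n+1)`-st edge labeled `(x n, y n)`: `gₙ₊₁(xₙ₊₁) = yₙ₊₁` and
`gₙ₊₁|_{xₙ₊₁} = gₙ`. -/
def IsPath {N X : Type*} (act : N → X → X) (res : N → X → N)
    (g : ℕ → N) (x y : ℕ → X) : Prop :=
  ∀ n, act (g (n + 1)) (x n) = y n ∧ res (g (n + 1)) (x n) = g n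

/-- The action of a state on a finite word (first-read letter at the head). -/
def actWord {N X : Type*} (act : N → X → X) (res : N → X → N) : N → List X → List X
  | _, [] => []
  | q, a :: l => act q a :: actWord act res (res q a) l

lemma appendWord_lt {X : Type*} (l : List X) (ξ : ℕ → X) :
    ∀ (k : ℕ) (hk : k < l.length), appendWord l ξ k = l[k] := by
  induction l with
  | nil => simp
  | cons a t ih =>
    intro k hk
    cases k with
    | zero => rfl
    | succ k => simpa [appendWord, appendLetter] using ih k (by simpa using hk)

lemma appendWord_ge {X : Type*} (l : List X) (ξ : ℕ → X) (k : ℕ) :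
    appendWord l ξ (l.length + k) = ξ k := by
  induction l with
  | nil => simp [appendWord]
  | cons a t ih => simpa [appendWord, appendLetter, Nat.succ_add] using ih

lemma actWord_fix_of_chain {X N : Type*} (act : N → X → X) (res : N → X → N) :
    ∀ (l : List X) (s : ℕ → N),
    (∀ (k : ℕ) (hk : k < l.length), act (s k) l[k] = l[k] ∧ res (s k) l[k] = s (k+1)) →
    actWord act res (s 0) l = l := by
  intro l
  induction l with
  | nil => intro s _; rfl
  | cons a t ih =>
    intro s hs
    have h0 := hs 0 (by simp)
    simp only [List.getElem_cons_zero] at h0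
    have ht : actWord act res (s 1) t = t := by
      refine ih (fun k => s (k+1)) ?_
      intro k hk
      have hk' : k + 1 < (a :: t).length := by simpa using Nat.succ_lt_succ hk
      simpa using hs (k+1) hk'
    simp [actWord, h0.1, h0.2, ht]

lemma chain_of_actWord_fix {X N : Type*} (act : N → X → X) (res : N → X → N) :
    ∀ (l : List X) (q : N), actWord act res q l = l →
    ∃ s : ℕ → N, s 0 = q ∧
      ∀ (k : ℕ) (hk : k < l.length), act (s k) l[k] = l[k] ∧ res (s k) l[k] = s (k+1) := by
  intro l
  induction l with
  | nil => intro q _; exact ⟨fun _ => q, rfl, by simp⟩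
  | cons a t ih =>
    intro q hq
    simp only [actWord, List.cons.injEq] at hq
    obtain ⟨s', hs'0, hs'⟩ := ih (res q a) hq.2
    refine ⟨fun k => match k with | 0 => q | k+1 => s' k, rfl, ?_⟩
    intro k hk
    cases k with
    | zero => exact ⟨hq.1, hs'0.symm⟩
    | succ k => simpa using hs' k (by simpa using hk)

/-- for a contracting action with nucleus automaton `(N, act, res)` and
asymptotic equivalence `E`, the quotient map satisfies Condition 3.2
(`p ξ = p η → p (ξ w) = p (η w)` for all finite `w`) if and only if Condition 3.4
holds: for every left-infinite path in the nucleus and every finite word `w`, there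
is an identically-labeled left-infinite path ending at a state `g` with `g w = w`. -/
theorem condition32_iff_condition34 {X N : Type*} [Fintype X] [Fintype N]
    (act : N → X → X) (res : N → X → N)
    (E : (ℕ → X) → (ℕ → X) → Prop)
    (hE : ∀ x y, E x y ↔ ∃ g : ℕ → N, IsPath act res g x y) :
    (∀ x y : ℕ → X, E x y → ∀ w : List X, E (appendWord w x) (appendWord w y)) ↔
    (∀ (g : ℕ → N) (x y : ℕ → X), IsPath act res g x y → ∀ w : List X,
      ∃ h : ℕ → N, IsPath act res h x y ∧ actWord act res (h 0) w = w) := by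
  constructor
  · intro H g x y hg w
    set len := w.length with hlen
    have hexy : E x y := (hE x y).mpr ⟨g, hg⟩
    obtain ⟨g', hg'⟩ := (hE _ _).mp (H x y hexy w.reverse)
    have hlrev : w.reverse.length = len := by simp [hlen]
    refine ⟨fun n => g' (len + n), ?_, ?_⟩
    · intro n
      have := hg' (len + n)
      rw [← hlrev] at this
      rwa [appendWord_ge, appendWord_ge, hlrev, Nat.add_assoc] at this
    · have := actWord_fix_of_chain act res w (fun j => g' (len - j)) ?_
      · simpa using this
      · intro j hj
        have hn : len - 1 - j < w.reverse.length := by omega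
        have := hg' (len - 1 - j)
        rw [appendWord_lt _ _ _ hn, appendWord_lt _ _ _ hn] at this
        rw [List.getElem_reverse] at this
        have e1 : w.length - 1 - (len - 1 - j) = j := by omega
        have e2 : len - 1 - j + 1 = len - j := by omega
        have e3 : len - (j + 1) = len - 1 - j := by omega
        simp only [e1, e2] at this
        refine ⟨this.1, ?_⟩
        show res (g' (len - j)) _ = g' (len - (j + 1))
        rw [e3]
        exact this.2
  · intro H x y hexy w
    obtain ⟨g, hg⟩ := (hE x y).mp hexy
    obtain ⟨h, hh, hfix⟩ := H g x y hg w.reverse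
    set len := w.length with hlen
    obtain ⟨s, hs0, hs⟩ := chain_of_actWord_fix act res w.reverse (h 0) hfix
    refine (hE _ _).mpr ⟨fun n => if n ≤ len then s (len - n) else h (n - len), ?_⟩
    intro n
    rcases lt_or_ge n len with hn | hn
    · -- edge among the appended letters
      have hn' : len - 1 - n < w.reverse.length := by simp [hlen]; omega
      have hw : appendWord w x n = w[n]'(by omega) := appendWord_lt _ _ _ (by omega)
      have hw' : appendWord w y n = w[n]'(by omega) := appendWord_lt _ _ _ (by omega)
      have hrev : w.reverse[len - 1 - n]'hn' = w[n]'(by omega) := by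
        rw [List.getElem_reverse]; congr 1; simp [hlen]; omega
      have hch := hs (len - 1 - n) hn'
      rw [hrev] at hch
      have e2 : len - 1 - n + 1 = len - n := by omega
      rw [e2] at hch
      have e3 : len - (n + 1) = len - 1 - n := by omega
      simp only [hw, hw', if_pos (by omega : n + 1 ≤ len), if_pos (by omega : n ≤ len), e3]
      exact hch
    · -- edges in the infinite tail
      have hx : appendWord w x n = x (n - len) := by
        have := appendWord_ge w x (n - len)
        rwa [← hlen, Nat.add_sub_cancel' hn] at this
      have hy : appendWord w y n = y (n - len) := by
        have := appendWord_ge w y (n - len)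
        rwa [← hlen, Nat.add_sub_cancel' hn] at this
      rcases Nat.eq_or_lt_of_le hn with heq | hlt
      · -- n = len
        subst heq
        simp only [hx, hy, Nat.sub_self, if_neg (by omega : ¬ len + 1 ≤ len),
          if_pos (le_refl len), Nat.add_sub_cancel_left, hs0]
        exact hh 0
      · have := hh (n - len)
        have e4 : n - len + 1 = n + 1 - len := by omega
        rw [e4] at this
        simp only [hx, hy, if_neg (by omega : ¬ n + 1 ≤ len), if_neg (by omega : ¬ n ≤ len)]
        exact this
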